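/- Let E be a reflexive real Banach space with the Kadec-Klee property and S its unit sphere. Define the multifunction Ψ : E* → 2^S by Ψ(φ) = {x ∈ S : φ(x) = ‖φ‖_{E*}}. Then the restriction of Ψ to E* \ {0} is upper semicontinuous: for every closed set C ⊆ S, the set {φ ∈ E* \ {0} : Ψ(φ) ∩ C ≠ ∅} is closed in E* \ {0}. -/

import Mathlib

set_option maxHeartbeats 1000000
set_option synthInstance.maxHeartbeats 400000

open NormedSpace Filter Topology

/-- Weak sequential compactness of the closed unit ball of a reflexive space
(Eberlein–Šmulian, easy case via separable reduction). -/
lemma aux_weak_seq_compact (E : Type*) [NormedAddCommGroup E] [NormedSpace ℝ E]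
    (hrefl : Function.Surjective (inclusionInDoubleDual ℝ E))
    (x : ℕ → E) (hx : ∀ n, ‖x n‖ ≤ 1) :
    ∃ (y : E) (k : ℕ → ℕ), StrictMono k ∧ ‖y‖ ≤ 1 ∧
      ∀ f : StrongDual ℝ E, Tendsto (fun j => f (x (k j))) atTop (𝓝 (f y)) := by
  classical
  set Y : Submodule ℝ E := (Submodule.span ℝ (Set.range x)).topologicalClosure with hY
  have hYclosed : IsClosed (Y : Set E) := Submodule.isClosed_topologicalClosure _
  have hxY : ∀ n, x n ∈ Y :=
    fun n => Submodule.le_topologicalClosure _ (Submodule.subset_span ⟨n, rfl⟩)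
  -- a countable set whose closure contains Y
  have hsep : TopologicalSpace.IsSeparable (Y : Set E) := by
    have h1 : TopologicalSpace.IsSeparable (Set.range x) :=
      (Set.countable_range x).isSeparable
    have h2 := h1.span (R := ℝ)
    have h3 := h2.closure
    rw [hY]
    exact h3.mono (by rw [Submodule.topologicalClosure_coe])
  obtain ⟨c, hc_count, hc_sub⟩ := hsep
  have hc'_count : (insert (0 : E) c).Countable := hc_count.insert 0
  obtain ⟨yseq, hyseq⟩ := hc'_count.exists_eq_range ⟨0, Set.mem_insert 0 c⟩
  have hYsub : (Y : Set E) ⊆ closure (Set.range yseq) := by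
    rw [← hyseq]
    exact hc_sub.trans (closure_mono (Set.subset_insert 0 c))
  -- support functionals at a dense sequence
  have hpsi : ∀ i, ∃ g : StrongDual ℝ E, ‖g‖ ≤ 1 ∧ g (yseq i) = ‖yseq i‖ := by
    intro i
    by_cases h : yseq i = 0
    · exact ⟨0, by simp, by simp [h]⟩
    · obtain ⟨g, hg1, hg2⟩ := exists_dual_vector ℝ (yseq i) (norm_ne_zero_iff.mpr h)
      exact ⟨g, hg1.le, hg2⟩
  choose ψ hψ1 hψ2 using hpsi
  -- separation: the ψ i and the annihilator of Y detect vanishing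
  have hsepw : ∀ w : E, (∀ f : StrongDual ℝ E, (∀ v ∈ Y, f v = 0) → f w = 0) →
      (∀ i, ψ i w = 0) → w = 0 := by
    intro w hann hψw
    have hwY : w ∈ Y := by
      by_contra hw
      obtain ⟨f, u, hfu, huw⟩ := geometric_hahn_banach_closed_point Y.convex hYclosed hw
      have hf0 : ∀ v ∈ Y, f v = 0 := by
        intro v hv
        by_contra hfv
        have ht : ((|u| + 1) / f v) • v ∈ Y := Y.smul_mem _ hv
        have h1 := hfu _ ht
        rw [map_smul, smul_eq_mul, div_mul_cancel₀ _ hfv] at h1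
        have := le_abs_self u
        linarith
      have h0 : (0 : ℝ) < u := by simpa using hfu 0 Y.zero_mem
      have := hann f hf0
      linarith
    by_contra hw0
    have hpos : 0 < ‖w‖ := norm_pos_iff.mpr hw0
    have hwc : w ∈ closure (Set.range yseq) := hYsub hwY
    rw [Metric.mem_closure_range_iff] at hwc
    obtain ⟨i, hi⟩ := hwc (‖w‖ / 3) (by positivity)
    rw [dist_eq_norm] at hi
    have h2 : |ψ i (w - yseq i)| ≤ ‖w - yseq i‖ := by
      calc |ψ i (w - yseq i)| = ‖ψ i (w - yseq i)‖ := (Real.norm_eq_abs _).symm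
        _ ≤ ‖ψ i‖ * ‖w - yseq i‖ := (ψ i).le_opNorm _
        _ ≤ 1 * ‖w - yseq i‖ := by
            exact mul_le_mul_of_nonneg_right (hψ1 i) (norm_nonneg _)
        _ = ‖w - yseq i‖ := one_mul _
    have h3 : ψ i w = ψ i (yseq i) + ψ i (w - yseq i) := by
      rw [← map_add]; congr 1; abel
    have h4 : ‖w‖ - ‖w - yseq i‖ ≤ ‖yseq i‖ := by
      have := norm_sub_norm_le w (yseq i)
      linarith [abs_le.mp (le_refl |(‖w‖ - ‖yseq i‖)|)]
    have h5 := hψ2 i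
    have h6 := hψw i
    have h7 := abs_le.mp h2
    have h8 : ‖w‖ - ‖w - yseq i‖ ≤ ‖yseq i‖ := by
      have h := norm_sub_norm_le w (yseq i)
      have := le_abs_self (‖w‖ - ‖yseq i‖)
      linarith
    linarith
  -- the compact set T
  set W := WeakDual ℝ (StrongDual ℝ E)
  set A : Set W := {z : W | ∀ f : StrongDual ℝ E, (∀ v ∈ Y, f v = 0) → z f = 0} with hA
  have hAclosed : IsClosed A := by
    have : A = ⋂ f ∈ {f : StrongDual ℝ E | ∀ v ∈ Y, f v = 0}, {z : W | z f = (0 : ℝ)} := by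
      ext z; simp [hA, Set.mem_iInter]
    rw [this]
    exact isClosed_biInter fun f _ =>
      isClosed_eq (WeakDual.eval_continuous f) continuous_const
  set T : Set W := (WeakDual.toStrongDual ⁻¹' Metric.closedBall 0 1) ∩ A with hT
  have hTcomp : IsCompact T := (WeakDual.isCompact_closedBall (𝕜 := ℝ) (E := StrongDual ℝ E) 0 1).inter_right hAclosed
  -- the sequence in T
  set zseq : ℕ → W := fun n => StrongDual.toWeakDual (inclusionInDoubleDual ℝ E (x n))
    with hzseq
  have hzapp : ∀ n (f : StrongDual ℝ E), zseq n f = f (x n) := fun n f => rfl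
  have hzmem : ∀ n, zseq n ∈ T := by
    intro n
    constructor
    · simp only [Set.mem_preimage, Metric.mem_closedBall, dist_zero_right]
      have : WeakDual.toStrongDual (zseq n) = inclusionInDoubleDual ℝ E (x n) :=
        LinearEquiv.symm_apply_apply _ _
      rw [this]
      exact (dist_zero_right (inclusionInDoubleDual ℝ E (x n))).le.trans ((double_dual_bound ℝ E (x n)).trans (hx n))
    · intro f hf
      rw [hzapp]
      exact hf _ (hxY n)
  haveI : CompactSpace ↥T := isCompact_iff_compactSpace.mp hTcomp
  -- embed T into ℕ → ℝ
  set g : ↥T → (ℕ → ℝ) := fun z i => (z : W) (ψ i) with hg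
  have hgcont : Continuous g :=
    continuous_pi fun i => (WeakDual.eval_continuous (ψ i)).comp continuous_subtype_val
  have hginj : Function.Injective g := by
    intro z z' h
    obtain ⟨w, hw⟩ := hrefl (WeakDual.toStrongDual (z : W) - WeakDual.toStrongDual (z' : W))
    have happ : ∀ f : StrongDual ℝ E, f w = (z : W) f - (z' : W) f := by
      intro f
      have h0 := congrArg (fun (Φ : StrongDual ℝ (StrongDual ℝ E)) => Φ f) hw
      simpa only [NormedSpace.dual_def, ContinuousLinearMap.sub_apply,
        WeakDual.toStrongDual_apply] using h0
    have hw0 : w = 0 := by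
      apply hsepw w
      · intro f hf
        rw [happ f, z.2.2 f hf, z'.2.2 f hf, sub_zero]
      · intro i
        rw [happ (ψ i)]
        have := congrFun h i
        simp only [hg] at this
        rw [this, sub_self]
    apply Subtype.ext
    apply DFunLike.ext
    intro f
    have := happ f
    rw [hw0, map_zero] at this
    linarith
  have hemb := hgcont.isClosedEmbedding hginj
  haveI : TopologicalSpace.PseudoMetrizableSpace ↥T :=
    hemb.toIsEmbedding.toIsInducing.pseudoMetrizableSpace
  have hseq : IsSeqCompact (Set.univ : Set ↥T) := isCompact_univ.isSeqCompact
  obtain ⟨ζ, -, k, hk, hkz⟩ :=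
    hseq (x := fun n => (⟨zseq n, hzmem n⟩ : ↥T)) (fun n => Set.mem_univ _)
  have hconv : ∀ f : StrongDual ℝ E, Tendsto (fun j => f (x (k j))) atTop (𝓝 ((ζ : W) f)) := by
    intro f
    have hcont : Continuous fun z : ↥T => (z : W) f :=
      (WeakDual.eval_continuous f).comp continuous_subtype_val
    have := (hcont.tendsto ζ).comp hkz
    exact this
  obtain ⟨y, hy⟩ := hrefl (WeakDual.toStrongDual (ζ : W))
  have hyf : ∀ f : StrongDual ℝ E, f y = (ζ : W) f := by
    intro f
    have h0 := congrArg (fun (Φ : StrongDual ℝ (StrongDual ℝ E)) => Φ f) hy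
    simpa only [NormedSpace.dual_def, WeakDual.toStrongDual_apply] using h0
  refine ⟨y, k, hk, ?_, fun f => by rw [hyf f]; exact hconv f⟩
  apply norm_le_dual_bound ℝ y zero_le_one
  intro f
  rw [one_mul, hyf f]
  have hζ : ‖WeakDual.toStrongDual (ζ : W)‖ ≤ 1 := by
    have := ζ.2.1
    exact (dist_zero_right (WeakDual.toStrongDual (ζ : W))).symm.le.trans this
  calc ‖(ζ : W) f‖ = ‖WeakDual.toStrongDual (ζ : W) f‖ := rfl
    _ ≤ ‖WeakDual.toStrongDual (ζ : W)‖ * ‖f‖ := (WeakDual.toStrongDual (ζ : W)).le_opNorm f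
    _ ≤ 1 * ‖f‖ := mul_le_mul_of_nonneg_right hζ (norm_nonneg _)
    _ = ‖f‖ := one_mul _

/-- The restriction of `Ψ(φ) = {x ∈ S : φ x = ‖φ‖}` to `E* \ {0}` is upper semicontinuous. -/
theorem stmt1 (E : Type*) [NormedAddCommGroup E] [NormedSpace ℝ E] [CompleteSpace E]
    (hrefl : Function.Surjective (inclusionInDoubleDual ℝ E))
    (hKK : ∀ (x : ℕ → E) (y : E), (∀ n, ‖x n‖ = 1) → ‖y‖ = 1 →
      (∀ φ : StrongDual ℝ E, Tendsto (fun n => φ (x n)) atTop (𝓝 (φ y))) →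
      Tendsto (fun n => ‖x n - y‖) atTop (𝓝 0))
    (C : Set E) (hCS : C ⊆ Metric.sphere (0 : E) 1) (hC : IsClosed C) :
    IsClosed {φ : {ψ : StrongDual ℝ E // ψ ≠ 0} | ∃ x ∈ C, (φ : StrongDual ℝ E) x = ‖(φ : StrongDual ℝ E)‖} := by
  apply IsSeqClosed.isClosed
  intro Φ φ hmem hΦ
  choose x hxC hxval using hmem
  have hx1 : ∀ n, ‖x n‖ = 1 := by
    intro n
    have := hCS (hxC n)
    simpa [Metric.mem_sphere, dist_zero_right] using this
  have hφn : Tendsto (fun n => (Φ n : StrongDual ℝ E)) atTop (𝓝 (φ : StrongDual ℝ E)) :=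
    (continuous_subtype_val.tendsto φ).comp hΦ
  have hnorm : Tendsto (fun n => ‖(Φ n : StrongDual ℝ E)‖) atTop (𝓝 ‖(φ : StrongDual ℝ E)‖) :=
    (continuous_norm.tendsto _).comp hφn
  -- φ (x n) → ‖φ‖
  have hdiff : Tendsto (fun n => (φ : StrongDual ℝ E) (x n) - (Φ n : StrongDual ℝ E) (x n)) atTop (𝓝 0) := by
    apply squeeze_zero_norm (a := fun n => ‖(φ : StrongDual ℝ E) - (Φ n : StrongDual ℝ E)‖)
    · intro n
      calc ‖(φ : StrongDual ℝ E) (x n) - (Φ n : StrongDual ℝ E) (x n)‖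
          = ‖((φ : StrongDual ℝ E) - (Φ n : StrongDual ℝ E)) (x n)‖ := by simp
        _ ≤ ‖(φ : StrongDual ℝ E) - (Φ n : StrongDual ℝ E)‖ * ‖x n‖ := ContinuousLinearMap.le_opNorm _ _
        _ = ‖(φ : StrongDual ℝ E) - (Φ n : StrongDual ℝ E)‖ := by rw [hx1 n, mul_one]
    · have : Tendsto (fun n => (φ : StrongDual ℝ E) - (Φ n : StrongDual ℝ E)) atTop (𝓝 0) := by
        simpa using (tendsto_const_nhds (x := (φ : StrongDual ℝ E))).sub hφn
      simpa [Function.comp_def] using (continuous_norm.tendsto _).comp this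
  have hφx : Tendsto (fun n => (φ : StrongDual ℝ E) (x n)) atTop (𝓝 ‖(φ : StrongDual ℝ E)‖) := by
    have h1 : Tendsto (fun n => (Φ n : StrongDual ℝ E) (x n)) atTop (𝓝 ‖(φ : StrongDual ℝ E)‖) := by
      have : (fun n => (Φ n : StrongDual ℝ E) (x n)) = fun n => ‖(Φ n : StrongDual ℝ E)‖ := by
        funext n; exact hxval n
      rw [this]; exact hnorm
    have := hdiff.add h1
    simpa using this
  -- weakly convergent subsequence
  obtain ⟨y, k, hk, hy1, hyw⟩ := aux_weak_seq_compact E hrefl x (fun n => (hx1 n).le)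
  have hφy : (φ : StrongDual ℝ E) y = ‖(φ : StrongDual ℝ E)‖ := by
    have h1 : Tendsto (fun j => (φ : StrongDual ℝ E) (x (k j))) atTop (𝓝 ‖(φ : StrongDual ℝ E)‖) :=
      hφx.comp hk.tendsto_atTop
    exact tendsto_nhds_unique (hyw (φ : StrongDual ℝ E)) h1
  have hφpos : 0 < ‖(φ : StrongDual ℝ E)‖ := norm_pos_iff.mpr φ.2
  have hy_norm : ‖y‖ = 1 := by
    have h1 : ‖(φ : StrongDual ℝ E)‖ ≤ ‖(φ : StrongDual ℝ E)‖ * ‖y‖ := by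
      calc ‖(φ : StrongDual ℝ E)‖ = (φ : StrongDual ℝ E) y := hφy.symm
        _ ≤ ‖(φ : StrongDual ℝ E) y‖ := le_abs_self _
        _ ≤ ‖(φ : StrongDual ℝ E)‖ * ‖y‖ := ContinuousLinearMap.le_opNorm _ _
    have h2 : 1 ≤ ‖y‖ := by
      by_contra h
      push_neg at h
      nlinarith
    linarith
  -- Kadec–Klee: norm convergence of the subsequence
  have hKKconv := hKK (fun j => x (k j)) y (fun j => hx1 (k j)) hy_norm hyw
  have hnormconv : Tendsto (fun j => x (k j)) atTop (𝓝 y) := by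
    rw [tendsto_iff_norm_sub_tendsto_zero]
    exact hKKconv
  have hyC : y ∈ C := hC.mem_of_tendsto hnormconv (Filter.Eventually.of_forall fun j => hxC (k j))
  exact ⟨y, hyC, hφy⟩
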